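/- Let x = ∑ a_i e_i and y = ∑ b_i e_i be two elements of ℓ¹ such that the set {a_i / b_i : i ∈ ℕ, b_i ≠ 0} is dense in ℝ. Then the 2-dimensional subspace span{x, y} of ℓ¹ is strictly convex. -/

import Mathlib

open scoped ENNReal

private lemma aux_quad {a c D : ℝ} (h : ∀ s : ℝ, 0 ≤ a * s * (D + c * s)) (ha : a ≠ 0) :
    D = 0 := by
  by_contra hD
  have he : 0 < |a * D| := abs_pos.2 (mul_ne_zero ha hD)
  have key : ∀ s : ℝ, 0 < s → |a * D| ≤ a * c * s := by
    intro s hs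
    have h1 := h s
    have h2 := h (-s)
    rw [abs_le]
    constructor <;> nlinarith [mul_pos hs hs]
  rcases le_or_gt (a * c) 0 with hc | hc
  · have := key 1 one_pos; nlinarith
  · have hkey := key (|a * D| / (2 * (a * c))) (by positivity)
    have h3 : a * c * (|a * D| / (2 * (a * c))) = |a * D| / 2 := by
      rw [mul_div_assoc', div_eq_iff (mul_ne_zero two_ne_zero hc.ne')]; ring
    rw [h3] at hkey
    linarith

private lemma aux_lin {b c d : ℝ} (h : ∀ t : ℝ, 0 ≤ b * (c * t + d)) (hb : b ≠ 0) : c = 0 := by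
  by_contra hc
  have hbc : b * c ≠ 0 := mul_ne_zero hb hc
  have h1 := h (-(|b * d| + 1) / (b * c))
  have h2 : b * (c * (-(|b * d| + 1) / (b * c)) + d) = -(|b * d| + 1) + b * d := by
    field_simp
  rw [h2] at h1
  nlinarith [le_abs_self (b * d)]

private lemma same_sign {a b : ℝ} (h : |a + b| = |a| + |b|) : 0 ≤ a * b := by
  nlinarith [sq_abs (a + b), sq_abs a, sq_abs b, abs_mul a b, abs_nonneg (a * b),
    abs_nonneg a, abs_nonneg b]

/-- Lindenstrauss: If `x = ∑ a i • e i` and `y = ∑ b i • e i` are elements of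
`ℓ¹` such that `{a i / b i : b i ≠ 0}` is dense in `ℝ`, then the 2-dimensional subspace
`span {x, y}` of `ℓ¹` is strictly convex. -/
theorem stmt_15 (x y : lp (fun _ : ℕ => ℝ) 1)
    (hdense : Dense {r : ℝ | ∃ i : ℕ, (y : ∀ _ : ℕ, ℝ) i ≠ 0 ∧
      r = (x : ∀ _ : ℕ, ℝ) i / (y : ∀ _ : ℕ, ℝ) i}) :
    ∀ u v : lp (fun _ : ℕ => ℝ) 1,
      u ∈ Submodule.span ℝ {x, y} → v ∈ Submodule.span ℝ {x, y} →
      ‖u‖ = 1 → ‖v‖ = 1 → u ≠ v → ‖u + v‖ < 2 := by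
  intro u v hu hv hnu hnv hne
  have hp1 : (0 : ℝ) < (1 : ℝ≥0∞).toReal := by norm_num
  -- the ℓ¹ norm is the sum of absolute values
  have norm_eq : ∀ f : lp (fun _ : ℕ => ℝ) 1, ‖f‖ = ∑' i, |(f : ∀ _ : ℕ, ℝ) i| := by
    intro f
    have h := lp.hasSum_norm hp1 f
    simp only [ENNReal.toReal_one, Real.rpow_one, Real.norm_eq_abs] at h
    exact h.tsum_eq.symm
  have summ : ∀ f : lp (fun _ : ℕ => ℝ) 1, Summable (fun i => |(f : ∀ _ : ℕ, ℝ) i|) := by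
    intro f
    have := (lp.memℓp f).summable hp1
    simpa only [ENNReal.toReal_one, Real.rpow_one, Real.norm_eq_abs] using this
  have hle : ‖u + v‖ ≤ 2 := by
    calc ‖u + v‖ ≤ ‖u‖ + ‖v‖ := norm_add_le u v
    _ = 2 := by rw [hnu, hnv]; norm_num
  refine lt_of_le_of_ne hle ?_
  intro heq
  -- pointwise same sign
  have hsign : ∀ i : ℕ, 0 ≤ (u : ∀ _ : ℕ, ℝ) i * (v : ∀ _ : ℕ, ℝ) i := by
    intro i
    apply same_sign
    by_contra habs
    have hlt : |(u : ∀ _ : ℕ, ℝ) i + (v : ∀ _ : ℕ, ℝ) i| <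
        |(u : ∀ _ : ℕ, ℝ) i| + |(v : ∀ _ : ℕ, ℝ) i| :=
      lt_of_le_of_ne (abs_add_le _ _) habs
    have hsg : Summable (fun j => |(u : ∀ _ : ℕ, ℝ) j| + |(v : ∀ _ : ℕ, ℝ) j|) :=
      (summ u).add (summ v)
    have hlt' : ∑' j, |(u : ∀ _ : ℕ, ℝ) j + (v : ∀ _ : ℕ, ℝ) j| <
        ∑' j, (|(u : ∀ _ : ℕ, ℝ) j| + |(v : ∀ _ : ℕ, ℝ) j|) := by
      refine Summable.tsum_lt_tsum_of_nonneg (fun b => abs_nonneg _) (fun b => abs_add_le _ _) hlt hsg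
    have e1 : ∑' j, |(u : ∀ _ : ℕ, ℝ) j + (v : ∀ _ : ℕ, ℝ) j| = 2 := by
      have := norm_eq (u + v)
      rw [heq] at this
      simpa [lp.coeFn_add, Pi.add_apply] using this.symm
    have e2 : ∑' j, (|(u : ∀ _ : ℕ, ℝ) j| + |(v : ∀ _ : ℕ, ℝ) j|) = 2 := by
      rw [Summable.tsum_add (summ u) (summ v), ← norm_eq u, ← norm_eq v, hnu, hnv]
      norm_num
    rw [e1, e2] at hlt'
    exact lt_irrefl _ hlt'
  -- coefficients
  rw [Submodule.mem_span_pair] at hu hv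
  obtain ⟨α, β, hu⟩ := hu
  obtain ⟨γ, δ, hv⟩ := hv
  have hui : ∀ i : ℕ, (u : ∀ _ : ℕ, ℝ) i = α * (x : ∀ _ : ℕ, ℝ) i + β * (y : ∀ _ : ℕ, ℝ) i := by
    intro i
    rw [← hu]
    simp [lp.coeFn_add, lp.coeFn_smul, Pi.add_apply, Pi.smul_apply, smul_eq_mul]
    rfl
  have hvi : ∀ i : ℕ, (v : ∀ _ : ℕ, ℝ) i = γ * (x : ∀ _ : ℕ, ℝ) i + δ * (y : ∀ _ : ℕ, ℝ) i := by
    intro i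
    rw [← hv]
    simp [lp.coeFn_add, lp.coeFn_smul, Pi.add_apply, Pi.smul_apply, smul_eq_mul]
    rfl
  -- the key polynomial nonnegativity on all of ℝ
  have hP : ∀ t : ℝ, 0 ≤ (α * t + β) * (γ * t + δ) := by
    have hclosed : IsClosed {t : ℝ | 0 ≤ (α * t + β) * (γ * t + δ)} :=
      isClosed_le continuous_const (by fun_prop)
    have hsub : {r : ℝ | ∃ i : ℕ, (y : ∀ _ : ℕ, ℝ) i ≠ 0 ∧
        r = (x : ∀ _ : ℕ, ℝ) i / (y : ∀ _ : ℕ, ℝ) i} ⊆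
        {t : ℝ | 0 ≤ (α * t + β) * (γ * t + δ)} := by
      rintro r ⟨i, hyi, rfl⟩
      have h1 := hsign i
      have key : (α * ((x : ∀ _ : ℕ, ℝ) i / (y : ∀ _ : ℕ, ℝ) i) + β) *
          (γ * ((x : ∀ _ : ℕ, ℝ) i / (y : ∀ _ : ℕ, ℝ) i) + δ) =
          ((u : ∀ _ : ℕ, ℝ) i * (v : ∀ _ : ℕ, ℝ) i) / ((y : ∀ _ : ℕ, ℝ) i) ^ 2 := by
        rw [hui, hvi, eq_div_iff (pow_ne_zero 2 hyi)]
        field_simp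
      show (0 : ℝ) ≤ _
      rw [key]
      positivity
    intro t
    exact hclosed.closure_subset_iff.mpr hsub (hdense t)
  -- derive v = c • u
  have hcu : ∃ c : ℝ, v = c • u := by
    by_cases hα : α ≠ 0
    · have hs : ∀ s : ℝ, 0 ≤ α * s * ((α * δ - β * γ) + γ * s) := by
        intro s
        have h1 := hP ((s - β) / α)
        have e : (α * ((s - β) / α) + β) * (γ * ((s - β) / α) + δ) =
            (α * s * ((α * δ - β * γ) + γ * s)) / α ^ 2 := by
          field_simp
          ring
        rw [e] at h1
        have hα2 : (0 : ℝ) < α ^ 2 := by positivity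
        rw [le_div_iff₀ hα2, zero_mul] at h1
        exact h1
      have hD : α * δ - β * γ = 0 := aux_quad hs hα
      refine ⟨γ / α, ?_⟩
      rw [← hu, ← hv, smul_add, smul_smul, smul_smul]
      have e1 : γ / α * α = γ := by field_simp
      have e2 : γ / α * β = δ := by field_simp; nlinarith [hD]
      rw [e1, e2]
    · push_neg at hα
      subst hα
      have hβ : β ≠ 0 := by
        intro h0
        subst h0
        rw [zero_smul, zero_smul, zero_add] at hu
        rw [← hu] at hnu
        simp at hnu
      have hγ : γ = 0 := by
        apply aux_lin (b := β) (c := γ) (d := δ) _ hβ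
        intro t
        have := hP t
        nlinarith
      subst hγ
      refine ⟨δ / β, ?_⟩
      rw [← hu, ← hv]
      simp only [zero_smul, zero_add, smul_smul]
      congr 1
      field_simp
  obtain ⟨c, rfl⟩ := hcu
  have hc1 : |c| = 1 := by
    rw [norm_smul, hnu, Real.norm_eq_abs, mul_one] at hnv
    exact hnv
  rcases abs_eq (le_of_lt one_pos) |>.mp hc1 with hc | hc
  · subst hc
    rw [one_smul] at hne
    exact hne rfl
  · subst hc
    have : u + (-1 : ℝ) • u = 0 := by
      rw [neg_one_smul]
      abel
    rw [this, norm_zero] at heq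
    norm_num at heq
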